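/- arXiv:1604.01391 — 2 statements merged into one kernel-verified Lean document; each statement's English description precedes it below -/
import Mathlib

section
/- The bilinear bracket on the polynomial ring C[x11, x12, x21, x22] determined on generators by {x11,x12} = x11·x12, {x11,x21} = x11·x21, {x11,x22} = 2·x12·x21, {x12,x21} = 0, {x12,x22} = x12·x22, {x21,x22} = x21·x22, and extended by the Leibniz rule in each argument, satisfies the Jacobi identity, so it makes C[x11,x12,x21,x22] a Poisson algebra. -/
/- The semiclassical limit Poisson bracket on O(M_2) = C[x11,x12,x21,x22],
realized on the polynomial ring `MvPolynomial (Fin 4) ℂ` with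
x11 = X 0, x12 = X 1, x21 = X 2, x22 = X 3.  The Leibniz-rule extension of a
bracket given on generators by an antisymmetric bivector `P2 i j = {x_i, x_j}`
is the bidifferential operator `pb2 f g = ∑ i j, P2 i j * ∂f/∂x_i * ∂g/∂x_j`. -/

open MvPolynomial

noncomputable section

abbrev A2 : Type := MvPolynomial (Fin 4) ℂ

def P2 : Fin 4 → Fin 4 → A2 :=
  ![![0, X 0 * X 1, X 0 * X 2, 2 * X 1 * X 2],
    ![-(X 0 * X 1), 0, 0, X 1 * X 3],
    ![-(X 0 * X 2), 0, 0, X 2 * X 3],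
    ![-(2 * X 1 * X 2), -(X 1 * X 3), -(X 2 * X 3), 0]]

/-- The Leibniz-rule extension of the bracket given on generators. -/
def pb2 (f g : A2) : A2 :=
  ∑ i : Fin 4, ∑ j : Fin 4, P2 i j * pderiv i f * pderiv j g

lemma P2_antisymm (i j : Fin 4) : P2 j i = - P2 i j := by
  fin_cases i <;> fin_cases j <;> simp [P2]

lemma pb2_add_swap (f g : A2) : pb2 f g + pb2 g f = 0 := by
  unfold pb2
  rw [show (∑ i : Fin 4, ∑ j : Fin 4, P2 i j * pderiv i g * pderiv j f)
      = ∑ i : Fin 4, ∑ j : Fin 4, P2 j i * pderiv j g * pderiv i f from Finset.sum_comm]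
  rw [← Finset.sum_add_distrib]
  refine Finset.sum_eq_zero fun i _ => ?_
  rw [← Finset.sum_add_distrib]
  refine Finset.sum_eq_zero fun j _ => ?_
  rw [P2_antisymm i j]; ring

lemma pb2_antisymm (f g : A2) : pb2 f g = - pb2 g f :=
  eq_neg_of_add_eq_zero_left (pb2_add_swap f g)

lemma pb2_add_right (f g h : A2) : pb2 f (g + h) = pb2 f g + pb2 f h := by
  simp [pb2, map_add, mul_add, Finset.sum_add_distrib]

lemma pb2_add_left (f g h : A2) : pb2 (f + g) h = pb2 f h + pb2 g h := by
  simp [pb2, map_add, add_mul, mul_add, Finset.sum_add_distrib]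

lemma pb2_smul_right (z : ℂ) (f g : A2) : pb2 f (z • g) = z • pb2 f g := by
  simp [pb2, map_smul, Finset.smul_sum, mul_smul_comm]

lemma pb2_zero_right (f : A2) : pb2 f 0 = 0 := by simp [pb2]
lemma pb2_zero_left (f : A2) : pb2 0 f = 0 := by simp [pb2]

lemma pb2_C_left (z : ℂ) (f : A2) : pb2 (C z) f = 0 := by simp [pb2, pderiv_C]
lemma pb2_C_right (z : ℂ) (f : A2) : pb2 f (C z) = 0 := by simp [pb2, pderiv_C]

lemma pb2_mul_right (f g h : A2) : pb2 f (g * h) = pb2 f g * h + g * pb2 f h := by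
  have key : ∀ i j : Fin 4, P2 i j * pderiv i f * pderiv j (g * h)
      = P2 i j * pderiv i f * pderiv j g * h + g * (P2 i j * pderiv i f * pderiv j h) := by
    intro i j; rw [pderiv_mul]; ring
  simp only [pb2, key, Finset.sum_add_distrib, Finset.mul_sum, Finset.sum_mul]

lemma pb2_mul_left (f g h : A2) : pb2 (f * g) h = f * pb2 g h + g * pb2 f h := by
  rw [pb2_antisymm, pb2_mul_right, pb2_antisymm h f, pb2_antisymm h g]; ring

lemma pb2_X_left (a : Fin 4) (p : A2) : pb2 (X a) p = ∑ j : Fin 4, P2 a j * pderiv j p := by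
  unfold pb2
  rw [Finset.sum_eq_single a]
  · simp
  · intro i _ hi
    refine Finset.sum_eq_zero fun j _ => ?_
    rw [pderiv_X, Pi.single_eq_of_ne (Ne.symm hi)]; ring
  · simp

lemma pb2_X_X (a b : Fin 4) : pb2 (X a) (X b) = P2 a b := by
  rw [pb2_X_left, Finset.sum_eq_single b] <;> simp_all [pderiv_X, Pi.single_eq_of_ne]

lemma pderiv_two (i : Fin 4) : pderiv i (2 : A2) = 0 := by
  rw [show (2:A2) = C 2 by simp [map_ofNat]]; exact pderiv_C

set_option maxHeartbeats 2000000 in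
lemma jac_gen (a b c : Fin 4) :
    pb2 (X a) (P2 b c) + pb2 (X b) (P2 c a) + pb2 (X c) (P2 a b) = 0 := by
  fin_cases a <;> fin_cases b <;> fin_cases c <;>
    simp [pb2_X_left, P2, Fin.sum_univ_four, pderiv_mul, pderiv_two] <;> ring

/-- The Jacobiator. -/
def Jac (f g h : A2) : A2 := pb2 f (pb2 g h) + pb2 g (pb2 h f) + pb2 h (pb2 f g)

lemma Jac_rot (f g h : A2) : Jac f g h = Jac h f g := by unfold Jac; ring

lemma Jac_C (z : ℂ) (g h : A2) : Jac (C z) g h = 0 := by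
  simp [Jac, pb2_C_left, pb2_C_right, pb2_zero_right]

lemma Jac_add_left (f₁ f₂ g h : A2) : Jac (f₁ + f₂) g h = Jac f₁ g h + Jac f₂ g h := by
  simp only [Jac, pb2_add_left, pb2_add_right]; ring

lemma Jac_mul_left (a b g h : A2) : Jac (a * b) g h = a * Jac b g h + b * Jac a g h := by
  simp only [Jac, pb2_mul_left, pb2_mul_right, pb2_add_right]
  linear_combination pb2 h a * pb2_add_swap g b + pb2 h b * pb2_add_swap g a

lemma Jac_XXX (a b c : Fin 4) : Jac (X a) (X b) (X c) = 0 := by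
  simp only [Jac, pb2_X_X]; exact jac_gen a b c

lemma Jac_XX (a b : Fin 4) (h : A2) : Jac (X a) (X b) h = 0 := by
  induction h using MvPolynomial.induction_on with
  | C z => rw [Jac_rot]; exact Jac_C z _ _
  | add p q hp hq => rw [Jac_rot, Jac_add_left, Jac_rot p (X a) (X b),
      Jac_rot (X b) p (X a), Jac_rot q (X a) (X b), Jac_rot (X b) q (X a), hp, hq, add_zero]
  | mul_X p n hp =>
      rw [Jac_rot (X a) (X b) (p * X n), Jac_mul_left, Jac_XXX,
        Jac_rot p (X a) (X b), Jac_rot (X b) p (X a), hp, mul_zero, mul_zero, add_zero]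

lemma Jac_X (a : Fin 4) (g h : A2) : Jac (X a) g h = 0 := by
  induction g using MvPolynomial.induction_on with
  | C z => rw [Jac_rot (X a), Jac_rot h]; exact Jac_C z _ _
  | add p q hp hq => rw [Jac_rot (X a) (p + q) h, Jac_rot h (X a) (p + q), Jac_add_left,
      Jac_rot p h (X a), Jac_rot q h (X a), hp, hq, add_zero]
  | mul_X p n hp =>
      rw [Jac_rot (X a) (p * X n) h, Jac_rot h (X a) (p * X n), Jac_mul_left,
        Jac_rot (X n) h (X a), Jac_XX, Jac_rot p h (X a), hp, mul_zero, mul_zero, add_zero]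

lemma Jac_zero (f g h : A2) : Jac f g h = 0 := by
  induction f using MvPolynomial.induction_on with
  | C z => exact Jac_C z g h
  | add p q hp hq => rw [Jac_add_left, hp, hq, add_zero]
  | mul_X p n hp => rw [Jac_mul_left, hp, Jac_X, mul_zero, mul_zero, add_zero]

/-- the bracket on `C[x11,x12,x21,x22]` determined on generators by
`{x11,x12} = x11 x12`, `{x11,x21} = x11 x21`, `{x11,x22} = 2 x12 x21`,
`{x12,x21} = 0`, `{x12,x22} = x12 x22`, `{x21,x22} = x21 x22`, extended by
bilinearity and the Leibniz rule in each argument, is antisymmetric and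
satisfies the Jacobi identity, hence makes the polynomial ring a Poisson
algebra. -/
theorem stmt0 :
    (pb2 (X 0) (X 1) = X 0 * X 1) ∧
    (pb2 (X 0) (X 2) = X 0 * X 2) ∧
    (pb2 (X 0) (X 3) = 2 * X 1 * X 2) ∧
    (pb2 (X 1) (X 2) = 0) ∧
    (pb2 (X 1) (X 3) = X 1 * X 3) ∧
    (pb2 (X 2) (X 3) = X 2 * X 3) ∧
    (∀ f g : A2, pb2 f g = - pb2 g f) ∧
    (∀ f g h : A2, pb2 f (g + h) = pb2 f g + pb2 f h) ∧
    (∀ (z : ℂ) (f g : A2), pb2 f (z • g) = z • pb2 f g) ∧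
    (∀ f g h : A2, pb2 f (g * h) = pb2 f g * h + g * pb2 f h) ∧
    (∀ f g h : A2, pb2 f (pb2 g h) + pb2 g (pb2 h f) + pb2 h (pb2 f g) = 0) := by
  refine ⟨?_, ?_, ?_, ?_, ?_, ?_, pb2_antisymm, pb2_add_right, pb2_smul_right,
    pb2_mul_right, Jac_zero⟩ <;> rw [pb2_X_X] <;> simp [P2]
end
end

section
/- In the Poisson algebra O(SL_2) = C[a,b,c,d]/(ad−bc−1) with the bracket induced from {a,b}=ab, {a,c}=ac, {a,d}=2bc, {b,c}=0, {b,d}=bd, {c,d}=cd, the Poisson centralizer of the trace tr = a + d equals the polynomial subalgebra C[tr]: an element g satisfies {a+d, g} = 0 if and only if g ∈ C[a+d]. -/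
/- The semiclassical limit Poisson bracket on O(M_2) = C[a,b,c,d],
realized on `MvPolynomial (Fin 4) ℂ` with a = X 0, b = X 1, c = X 2, d = X 3.
The Leibniz-rule extension of the bracket given on generators by the
antisymmetric bivector `P2 i j = {x_i, x_j}` is the bidifferential operator
`pb2 f g = ∑ i j, P2 i j * ∂f/∂x_i * ∂g/∂x_j`. -/

open MvPolynomial

noncomputable section

namespace S7
def q : A2 := X 0 * X 3 - X 1 * X 2 - 1
def t : A2 := X 0 + X 3
def wv : Fin 4 → ℤ := ![0, 1, -1, 0]

lemma wt_eq (d : Fin 4 →₀ ℕ) : Finsupp.weight wv d = (d 1 : ℤ) - (d 2 : ℤ) := by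
  rw [Finsupp.weight_apply, Finsupp.sum_fintype]
  · simp [Fin.sum_univ_four, wv]; ring
  · intro i; simp

lemma coeff_pderiv {n : ℕ} (i : Fin n) (p : MvPolynomial (Fin n) ℂ) (τ : Fin n →₀ ℕ) :
    coeff τ (pderiv i p) = (τ i + 1 : ℕ) * coeff (τ + Finsupp.single i 1) p := by
  induction p using MvPolynomial.induction_on' with
  | monomial d r =>
    rw [pderiv_monomial, coeff_monomial, coeff_monomial]
    by_cases h : d = τ + Finsupp.single i 1
    · subst h
      rw [if_pos (add_tsub_cancel_right _ _), if_pos rfl]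
      simp [mul_comm]
    · rw [if_neg h, mul_zero]
      by_cases hd : d i = 0
      · split_ifs with h2
        · simp [hd]
        · rfl
      · rw [if_neg]
        intro h2
        apply h
        rw [← h2, tsub_add_cancel_of_le]
        rw [Finsupp.single_le_iff]
        omega
  | add p q hp hq => simp only [map_add, coeff_add, hp, hq]; ring

lemma X_mul_pderiv_monomial {n : ℕ} (i : Fin n) (d : Fin n →₀ ℕ) (r : ℂ) :
    X i * pderiv i (monomial d r) = monomial d (r * (d i : ℂ)) := by
  rw [pderiv_monomial]
  by_cases hd : d i = 0
  · simp [hd]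
  · have hsum : Finsupp.single i 1 + (d - Finsupp.single i 1) = d := by
      ext j
      rw [Finsupp.add_apply, Finsupp.tsub_apply]
      rcases eq_or_ne j i with rfl | hj
      · simp; omega
      · simp [Finsupp.single_apply, Ne.symm hj, hj]
    rw [X, monomial_mul, hsum, one_mul]

lemma euler {m : ℤ} {g : A2} (hg : IsWeightedHomogeneous wv g m) :
    X 1 * pderiv 1 g - X 2 * pderiv 2 g = C (m : ℂ) * g := by
  have h0 : g = ∑ d ∈ g.support, monomial d (coeff d g) := (support_sum_monomial_coeff g).symm
  rw [h0, map_sum, map_sum, Finset.mul_sum, Finset.mul_sum, Finset.mul_sum, ← Finset.sum_sub_distrib]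
  apply Finset.sum_congr rfl
  intro d hd
  rw [X_mul_pderiv_monomial, X_mul_pderiv_monomial, C_mul_monomial, ← map_sub]
  congr 1
  have hw := hg (mem_support_iff.mp hd)
  rw [wt_eq] at hw
  have : ((d 1 : ℂ)) - (d 2 : ℂ) = (m : ℂ) := by
    exact_mod_cast congrArg (Int.cast : ℤ → ℂ) hw
  ring_nf
  linear_combination coeff d g * this

lemma pderiv_wh {m : ℤ} {g : A2} (i : Fin 4) (hg : IsWeightedHomogeneous wv g m) :
    IsWeightedHomogeneous wv (pderiv i g) (m - wv i) := by
  intro d hd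
  rw [coeff_pderiv] at hd
  have h2 : coeff (d + Finsupp.single i 1) g ≠ 0 := by
    intro h; rw [h, mul_zero] at hd; exact hd rfl
  have h3 := hg h2
  rw [map_add] at h3
  have h4 : Finsupp.weight wv (Finsupp.single i 1) = wv i := by
    rw [Finsupp.weight_apply, Finsupp.sum_single_index] <;> simp
  rw [h4] at h3
  omega


def Dop (g : A2) : A2 :=
  (-(2:A2) * X 1 * X 2) * pderiv 0 g + (X 1 * (X 0 - X 3)) * pderiv 1 g
  + (X 2 * (X 0 - X 3)) * pderiv 2 g + ((2:A2) * X 1 * X 2) * pderiv 3 g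

lemma Dop_add (f g : A2) : Dop (f + g) = Dop f + Dop g := by
  simp [Dop]; ring

lemma Dop_zero : Dop 0 = 0 := by simp [Dop]

abbrev wh (g : A2) (m : ℤ) := IsWeightedHomogeneous wv g m

lemma wh_C_mul (r : ℂ) {p : A2} {m : ℤ} (hp : wh p m) : wh (C r * p) m := by
  have := (isWeightedHomogeneous_C wv r).mul hp
  simpa using this

lemma wh_sub {p r : A2} {m : ℤ} (hp : wh p m) (hr : wh r m) : wh (p - r) m := by
  have := hp.add (wh_C_mul (-1) hr)
  simpa [sub_eq_add_neg] using this

lemma whX (i : Fin 4) : wh (X i) (wv i) := isWeightedHomogeneous_X ℂ wv i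

lemma wh_q : wh q 0 := by
  have h1 : wh (X 0 * X 3) 0 := by
    have := (whX 0).mul (whX 3); simpa [wv, wh] using this
  have h2 : wh (X 1 * X 2) 0 := by
    have := (whX 1).mul (whX 2); simpa [wv, wh] using this
  have h3 : wh 1 0 := isWeightedHomogeneous_one _ _
  exact wh_sub (wh_sub h1 h2) h3

lemma wh_t : wh t 0 := by
  have := (whX 0).add (by simpa [wv, wh] using whX 3)
  simpa [t, wv, wh] using this

lemma C2_eq : (C (2:ℂ) : A2) = 2 := map_ofNat C 2

lemma Dop_wh {m : ℤ} {g : A2} (hg : wh g m) : wh (Dop g) m := by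
  have h0 := pderiv_wh 0 hg
  have h1 := pderiv_wh 1 hg
  have h2 := pderiv_wh 2 hg
  have h3 := pderiv_wh 3 hg
  have w0 : wv 0 = 0 := rfl
  have w1 : wv 1 = 1 := rfl
  have w2 : wv 2 = -1 := rfl
  have w3 : wv 3 = 0 := rfl
  rw [w0, sub_zero] at h0
  rw [w3, sub_zero] at h3
  have whbc : wh (X 1 * X 2) 0 := by
    have := (whX 1).mul (whX 2); simpa [wv, wh] using this
  have whad : wh (X 0 - X 3) 0 := by
    apply wh_sub <;> [simpa [wv] using whX 0; simpa [wv] using whX 3]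
  unfold Dop
  apply IsWeightedHomogeneous.add
  apply IsWeightedHomogeneous.add
  apply IsWeightedHomogeneous.add
  · have : (-(2:A2) * X 1 * X 2) * pderiv 0 g = C (-2:ℂ) * ((X 1 * X 2) * pderiv 0 g) := by
      rw [map_neg, C2_eq]; ring
    rw [this]
    apply wh_C_mul
    simpa using whbc.mul h0
  · have h : wh (X 1 * (X 0 - X 3)) 1 := by
      have := (whX 1).mul whad; simpa [wv, wh] using this
    have h1' : wh (pderiv 1 g) (m - 1) := by rw [w1] at h1; exact h1
    have := IsWeightedHomogeneous.mul h h1'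
    simpa using this
  · have h : wh (X 2 * (X 0 - X 3)) (-1) := by
      have := (whX 2).mul whad; simpa [wv, wh] using this
    have h2' : wh (pderiv 2 g) (m + 1) := by rw [w2] at h2; rwa [sub_neg_eq_add] at h2
    have := IsWeightedHomogeneous.mul h h2'
    simpa using this
  · have : ((2:A2) * X 1 * X 2) * pderiv 3 g = C (2:ℂ) * ((X 1 * X 2) * pderiv 3 g) := by
      rw [C2_eq]; ring
    rw [this]
    apply wh_C_mul
    simpa using whbc.mul h3

abbrev wc (m : ℤ) : A2 →ₗ[ℂ] A2 := weightedHomogeneousComponent wv m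

lemma wh_monomial (d : Fin 4 →₀ ℕ) (r : ℂ) : wh (monomial d r) (Finsupp.weight wv d) :=
  isWeightedHomogeneous_monomial _ _ _ rfl

lemma wc_Dop (m : ℤ) (g : A2) : wc m (Dop g) = Dop (wc m g) := by
  induction g using MvPolynomial.induction_on' with
  | monomial d r =>
    by_cases h : Finsupp.weight wv d = m
    · have hm : wh (monomial d r) m := by rw [← h]; exact wh_monomial d r
      rw [(Dop_wh hm).weightedHomogeneousComponent_same, hm.weightedHomogeneousComponent_same]
    · rw [(Dop_wh (wh_monomial d r)).weightedHomogeneousComponent_ne _ (Ne.symm h),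
        (wh_monomial d r).weightedHomogeneousComponent_ne _ (Ne.symm h), Dop_zero]
  | add p p' hp hp' => rw [Dop_add, map_add, map_add, hp, hp', Dop_add]

lemma wc_q_mul (m : ℤ) (h : A2) : wc m (q * h) = q * wc m h := by
  induction h using MvPolynomial.induction_on' with
  | monomial d r =>
    by_cases hh : Finsupp.weight wv d = m
    · have h1 : wh (q * monomial d r) m := by
        have := wh_q.mul (wh_monomial d r); rw [hh] at this; simpa using this
      have hm : wh (monomial d r) m := by rw [← hh]; exact wh_monomial d r
      rw [h1.weightedHomogeneousComponent_same, hm.weightedHomogeneousComponent_same]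
    · have h1 : wh (q * monomial d r) (Finsupp.weight wv d) := by
        have := wh_q.mul (wh_monomial d r); simpa using this
      rw [h1.weightedHomogeneousComponent_ne _ (Ne.symm hh),
        (wh_monomial d r).weightedHomogeneousComponent_ne _ (Ne.symm hh), mul_zero]
  | add p p' hp hp' => rw [mul_add, map_add, map_add, hp, hp', mul_add]


abbrev B3 : Type := MvPolynomial (Fin 3) ℂ
abbrev B2 : Type := MvPolynomial (Fin 2) ℂ

def chi : A2 →ₐ[ℂ] B3 := aeval ![X 0, 1, X 1, X 2]
def Psi : B3 →ₐ[ℂ] A2 := aeval ![X 0, X 1 * X 2, X 3]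
def pii : B3 →ₐ[ℂ] B2 := aeval ![X 0, X 0 * X 1 - 1, X 1]
def iot : B2 →ₐ[ℂ] B3 := aeval ![X 0, X 2]
def u3 : B3 := X 0 * X 2 - X 1 - 1

lemma chi_X0 : chi (X 0) = X 0 := by simp [chi]
lemma chi_X1 : chi (X 1) = 1 := by simp [chi]
lemma chi_X2 : chi (X 2) = X 1 := by simp [chi]
lemma chi_X3 : chi (X 3) = X 2 := by simp [chi]

lemma chi_Psi (K : B3) : chi (Psi K) = K := by
  have h : (chi.comp Psi) = AlgHom.id ℂ B3 := by
    apply MvPolynomial.algHom_ext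
    intro i
    fin_cases i <;> simp [chi, Psi]
  calc chi (Psi K) = (chi.comp Psi) K := rfl
  _ = K := by rw [h]; rfl

lemma chi_q : chi q = u3 := by
  simp only [q, u3, map_sub, map_mul, map_one, chi_X0, chi_X1, chi_X2, chi_X3]
  ring

lemma pii_u3 : pii u3 = 0 := by
  simp only [u3, map_sub, map_mul, map_one, pii, aeval_X]
  simp

def pr (d : Fin 4 →₀ ℕ) : Fin 3 →₀ ℕ :=
  Finsupp.single 0 (d 0) + Finsupp.single 1 (d 2) + Finsupp.single 2 (d 3)

lemma pr_0 (d : Fin 4 →₀ ℕ) : pr d 0 = d 0 := by simp [pr, Finsupp.single_apply]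
lemma pr_1 (d : Fin 4 →₀ ℕ) : pr d 1 = d 2 := by simp [pr, Finsupp.single_apply]
lemma pr_2 (d : Fin 4 →₀ ℕ) : pr d 2 = d 3 := by simp [pr, Finsupp.single_apply]

lemma chi_monomial (d : Fin 4 →₀ ℕ) (r : ℂ) : chi (monomial d r) = monomial (pr d) r := by
  rw [chi, aeval_monomial, monomial_eq, Finsupp.prod_pow, Finsupp.prod_pow]
  rw [Fin.prod_univ_four, Fin.prod_univ_three]
  rw [pr_0, pr_1, pr_2]
  simp [algebraMap_eq]

lemma chi_eq_sum (g : A2) : chi g = ∑ d ∈ g.support, monomial (pr d) (coeff d g) := by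
  conv_lhs => rw [← support_sum_monomial_coeff g]
  rw [map_sum]
  exact Finset.sum_congr rfl (fun d _ => chi_monomial d _)

lemma chi_inj {m : ℤ} {g : A2} (hg : wh g m) (h : chi g = 0) : g = 0 := by
  ext d
  rw [coeff_zero]
  by_cases hd : coeff d g = 0
  · exact hd
  exfalso
  have hcd : coeff (pr d) (chi g) = coeff d g := by
    rw [chi_eq_sum, coeff_sum, Finset.sum_eq_single d]
    · rw [coeff_monomial, if_pos rfl]
    · intro e he hne
      rw [coeff_monomial, if_neg]
      intro hpe
      apply hne
      have h1 := hg (mem_support_iff.mp he)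
      have h2 := hg hd
      rw [wt_eq] at h1 h2
      have e0 : e 0 = d 0 := by
        have := DFunLike.congr_fun hpe (0 : Fin 3); rwa [pr_0, pr_0] at this
      have e2 : e 2 = d 2 := by
        have := DFunLike.congr_fun hpe (1 : Fin 3); rwa [pr_1, pr_1] at this
      have e3 : e 3 = d 3 := by
        have := DFunLike.congr_fun hpe (2 : Fin 3); rwa [pr_2, pr_2] at this
      have e1 : e 1 = d 1 := by omega
      ext j
      fin_cases j <;> assumption
    · intro hnot
      exact absurd (mem_support_iff.mpr hd) hnot
  rw [h, coeff_zero] at hcd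
  exact hd hcd.symm

lemma z_pow_dvd_chi {m : ℤ} {g : A2} (hg : wh g m) (k : ℕ) (hk : (k:ℤ) ≤ -m) :
    (X 1 : B3) ^ k ∣ chi g := by
  rw [chi_eq_sum]
  apply Finset.dvd_sum
  intro d hd
  have h1 := hg (mem_support_iff.mp hd)
  rw [wt_eq] at h1
  have h2 : k ≤ (pr d) 1 := by rw [pr_1]; omega
  refine ⟨monomial (pr d - Finsupp.single 1 k) (coeff d g), ?_⟩
  have hsum : Finsupp.single (1 : Fin 3) k + (pr d - Finsupp.single 1 k) = pr d := by
    ext j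
    rw [Finsupp.add_apply, Finsupp.tsub_apply]
    rcases eq_or_ne j 1 with rfl | hj
    · simp; omega
    · simp [Finsupp.single_apply, Ne.symm hj]
  rw [X_pow_eq_monomial, monomial_mul, one_mul, hsum]

lemma kerpi (G : B3) : u3 ∣ (G - iot (pii G)) := by
  induction G using MvPolynomial.induction_on with
  | C r => simp [iot, pii]
  | add p p' hp hp' =>
    have : p + p' - iot (pii (p + p')) = (p - iot (pii p)) + (p' - iot (pii p')) := by
      rw [map_add, map_add]; ring
    rw [this]; exact dvd_add hp hp'
  | mul_X p i hp =>
    have key : p * X i - iot (pii (p * X i)) =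
        (p - iot (pii p)) * X i + iot (pii p) * (X i - iot (pii (X i))) := by
      rw [map_mul, map_mul]; ring
    rw [key]
    apply dvd_add
    · exact hp.mul_right _
    apply Dvd.dvd.mul_left
    fin_cases i
    · simp [pii, iot]
    · refine ⟨-1, ?_⟩
      simp [pii, iot, u3]
      ring
    · simp [pii, iot]

lemma pii_zero_dvd {G : B3} (h : pii G = 0) : u3 ∣ G := by
  have := kerpi G
  rwa [h, map_zero, sub_zero] at this


lemma fin4_cases (i : Fin 4) : i = 0 ∨ i = 1 ∨ i = 2 ∨ i = 3 := by fin_cases i <;> decide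
lemma fin3_cases (i : Fin 3) : i = 0 ∨ i = 1 ∨ i = 2 := by fin_cases i <;> decide

lemma chi_pd (g : A2) :
    chi (pderiv 0 g) = pderiv 0 (chi g) ∧ chi (pderiv 3 g) = pderiv 2 (chi g) ∧
    chi (pderiv 2 g) = pderiv 1 (chi g) := by
  induction g using MvPolynomial.induction_on with
  | C r => simp
  | add p p' hp hp' =>
    refine ⟨?_, ?_, ?_⟩ <;>
      simp only [map_add, mul_add, hp.1, hp.2.1, hp.2.2, hp'.1, hp'.2.1, hp'.2.2]
  | mul_X p i hp =>
    obtain ⟨h1, h2, h3⟩ := hp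
    rcases fin4_cases i with rfl | rfl | rfl | rfl <;> refine ⟨?_, ?_, ?_⟩ <;>
      simp only [pderiv_mul, pderiv_X, Pi.single_apply, map_add, map_mul, map_zero, map_one,
        chi_X0, chi_X1, chi_X2, chi_X3] <;> simp
    all_goals first
      | linear_combination h1
      | linear_combination h2
      | linear_combination h3
      | linear_combination (X 0 : B3) * h1
      | linear_combination (X 0 : B3) * h2
      | linear_combination (X 0 : B3) * h3
      | linear_combination (X 1 : B3) * h1
      | linear_combination (X 1 : B3) * h2
      | linear_combination (X 1 : B3) * h3
      | linear_combination (X 2 : B3) * h1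
      | linear_combination (X 2 : B3) * h2
      | linear_combination (X 2 : B3) * h3

lemma pii_X0 : pii (X 0) = X 0 := by simp [pii]
lemma pii_X1 : pii (X 1) = X 0 * X 1 - 1 := by simp [pii]
lemma pii_X2 : pii (X 2) = X 1 := by simp [pii]

lemma pi_pd (G : B3) :
    pderiv 0 (pii G) = pii (pderiv 0 G) + X 1 * pii (pderiv 1 G) ∧
    pderiv 1 (pii G) = pii (pderiv 2 G) + X 0 * pii (pderiv 1 G) := by
  induction G using MvPolynomial.induction_on with
  | C r => simp
  | add p p' hp hp' =>
    refine ⟨?_, ?_⟩ <;>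
      simp only [map_add, mul_add, hp.1, hp.2, hp'.1, hp'.2] <;> ring
  | mul_X p i hp =>
    obtain ⟨g1, g2⟩ := hp
    rcases fin3_cases i with rfl | rfl | rfl <;> refine ⟨?_, ?_⟩ <;>
      simp only [pderiv_mul, pderiv_X, Pi.single_apply, map_add, map_mul, map_zero, map_one,
        pii_X0, pii_X1, pii_X2] <;> simp
    all_goals first
      | linear_combination g1
      | linear_combination g2
      | linear_combination (X 0 : B2) * g1
      | linear_combination (X 0 : B2) * g2
      | linear_combination (X 0 * X 1 - 1 : B2) * g1
      | linear_combination (X 0 * X 1 - 1 : B2) * g2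
      | linear_combination (X 1 : B2) * g1
      | linear_combination (X 1 : B2) * g2



def ee (r u : ℕ) : Fin 2 →₀ ℕ := Finsupp.single 0 r + Finsupp.single 1 u

lemma ee_0 (r u : ℕ) : ee r u 0 = r := by simp [ee, Finsupp.single_apply]
lemma ee_1 (r u : ℕ) : ee r u 1 = u := by simp [ee, Finsupp.single_apply]

lemma ee_eq_iff {r u r' u' : ℕ} : ee r u = ee r' u' ↔ (r = r' ∧ u = u') := by
  constructor
  · intro h
    constructor
    · have := DFunLike.congr_fun h (0 : Fin 2); rwa [ee_0, ee_0] at this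
    · have := DFunLike.congr_fun h (1 : Fin 2); rwa [ee_1, ee_1] at this
  · rintro ⟨rfl, rfl⟩; rfl

lemma eq_ee (τ : Fin 2 →₀ ℕ) : τ = ee (τ 0) (τ 1) := by
  ext j
  have h2 : j = 0 ∨ j = 1 := by fin_cases j <;> simp
  rcases h2 with rfl | rfl
  · rw [ee_0]
  · rw [ee_1]

lemma ee_add (r u r' u' : ℕ) : ee r u + ee r' u' = ee (r + r') (u + u') := by
  ext j
  have h2 : j = 0 ∨ j = 1 := by fin_cases j <;> simp
  rcases h2 with rfl | rfl <;> simp [Finsupp.add_apply, ee_0, ee_1]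

lemma single01 : Finsupp.single (0 : Fin 2) 1 = ee 1 0 := by simp [ee]
lemma single11 : Finsupp.single (1 : Fin 2) 1 = ee 0 1 := by simp [ee]

lemma cd0 (F : B2) (r u : ℕ) :
    coeff (ee r u) (pderiv 0 F) = ((r : ℂ) + 1) * coeff (ee (r+1) u) F := by
  rw [coeff_pderiv, single01, ee_add, ee_0]
  push_cast
  ring_nf

lemma cd1 (F : B2) (r u : ℕ) :
    coeff (ee r u) (pderiv 1 F) = ((u : ℂ) + 1) * coeff (ee r (u+1)) F := by
  rw [coeff_pderiv, single11, ee_add, ee_1]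
  push_cast
  ring_nf

lemma cX0 (F : B2) (r u : ℕ) :
    coeff (ee (r+1) u) (X 0 * F) = coeff (ee r u) F := by
  have h : ee (r+1) u = Finsupp.single (0:Fin 2) 1 + ee r u := by
    rw [single01, ee_add, ee_eq_iff]; omega
  rw [h, coeff_X_mul]

lemma cX1 (F : B2) (r u : ℕ) :
    coeff (ee r (u+1)) (X 1 * F) = coeff (ee r u) F := by
  have h : ee r (u+1) = Finsupp.single (1:Fin 2) 1 + ee r u := by
    rw [single11, ee_add, ee_eq_iff]; omega
  rw [h, coeff_X_mul]

lemma cX0' (F : B2) (u : ℕ) : coeff (ee 0 u) (X 0 * F) = 0 := by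
  classical
  rw [coeff_X_mul']
  rw [if_neg]
  simp [ee_0]

lemma cX1' (F : B2) (r : ℕ) : coeff (ee r 0) (X 1 * F) = 0 := by
  classical
  rw [coeff_X_mul']
  rw [if_neg]
  simp [ee_1]

lemma deg_sum (τ : Fin 2 →₀ ℕ) : ∑ i ∈ τ.support, τ i = τ 0 + τ 1 := by
  calc ∑ i ∈ τ.support, τ i = ∑ i : Fin 2, τ i :=
        Finset.sum_subset (Finset.subset_univ _)
          (by intro x _ hx; simpa using Finsupp.notMem_support_iff.mp hx)
  _ = τ 0 + τ 1 := Fin.sum_univ_two _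

lemma L1 {m : ℤ} (hm : 0 < m) (F : B2)
    (hF : 2 * (X 0 * X 1 - 1) * (pderiv 0 F - pderiv 1 F) = C (m:ℂ) * (X 0 - X 1) * F) :
    F = 0 := by
  classical
  set D : B2 := pderiv 0 F - pderiv 1 F with hD
  have e1 : C (2:ℂ) * (X 0 * (X 1 * D)) - C (2:ℂ) * D
      = C (m:ℂ) * (X 0 * F) - C (m:ℂ) * (X 1 * F) := by
    have h2 : (C (2:ℂ) : B2) = 2 := map_ofNat C 2
    rw [h2]
    linear_combination hF
  have coeD : ∀ r u : ℕ, coeff (ee r u) D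
      = ((r:ℂ)+1) * coeff (ee (r+1) u) F - ((u:ℂ)+1) * coeff (ee r (u+1)) F := by
    intro r u
    rw [hD, coeff_sub, cd0, cd1]
  -- edge relation
  have R1 : ∀ u : ℕ, (m:ℂ) * coeff (ee 0 u) F
      = 2 * coeff (ee 1 (u+1)) F - 2 * ((u:ℂ)+2) * coeff (ee 0 (u+2)) F := by
    intro u
    have h := congrArg (coeff (ee 0 (u+1))) e1
    rw [coeff_sub, coeff_sub, coeff_C_mul, coeff_C_mul, coeff_C_mul, coeff_C_mul,
      cX0' (X 1 * D), cX0' F, cX1, coeD] at h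
    push_cast at h ⊢
    linear_combination h
  -- main relation
  have R2 : ∀ r u : ℕ, (2*((r:ℂ)+1) + (m:ℂ)) * coeff (ee (r+1) u) F
      = (2*((u:ℂ)+1) + (m:ℂ)) * coeff (ee r (u+1)) F
        + 2*((r:ℂ)+2) * coeff (ee (r+2) (u+1)) F - 2*((u:ℂ)+2) * coeff (ee (r+1) (u+2)) F := by
    intro r u
    have h := congrArg (coeff (ee (r+1) (u+1))) e1
    have hsh : ee (r+1) (u+1) = Finsupp.single (0:Fin 2) 1 + ee r (u+1) := by
      rw [single01, ee_add]; congr 1 <;> omega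
    rw [coeff_sub, coeff_sub, coeff_C_mul, coeff_C_mul, coeff_C_mul, coeff_C_mul] at h
    rw [hsh, coeff_X_mul, ← hsh] at h
    rw [cX1 D, cX1 F, cX0, coeD, coeD] at h
    push_cast at h ⊢
    linear_combination h
  -- downward induction
  set P : ℕ → Prop := fun k => ∀ τ : Fin 2 →₀ ℕ, k ≤ τ 0 + τ 1 → coeff τ F = 0 with hP
  have base : P (F.totalDegree + 1) := by
    intro τ hτ
    apply coeff_eq_zero_of_totalDegree_lt
    rw [deg_sum]
    omega
  have mne : (m:ℂ) ≠ 0 := Int.cast_ne_zero.mpr (by omega)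
  have step : ∀ k, P (k+1) → P k := by
    intro k hk
    have lvl : ∀ r u : ℕ, r + u = k → coeff (ee r u) F = 0 := by
      intro r
      induction r with
      | zero =>
        intro u hu
        have h := R1 u
        have z1 : coeff (ee 1 (u+1)) F = 0 := by
          apply hk; rw [ee_0, ee_1]; omega
        have z2 : coeff (ee 0 (u+2)) F = 0 := by
          apply hk; rw [ee_0, ee_1]; omega
        rw [z1, z2] at h
        simp at h
        rcases h with h | h
        · omega
        · exact h
      | succ r ih =>
        intro u hu
        have h := R2 r u
        have z1 : coeff (ee r (u+1)) F = 0 := ih (u+1) (by omega)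
        have z2 : coeff (ee (r+2) (u+1)) F = 0 := by
          apply hk; rw [ee_0, ee_1]; omega
        have z3 : coeff (ee (r+1) (u+2)) F = 0 := by
          apply hk; rw [ee_0, ee_1]; omega
        rw [z1, z2, z3] at h
        simp at h
        rcases h with h | h
        · exfalso
          have hne : ((2*((r:ℤ)+1) + m : ℤ) : ℂ) ≠ 0 := Int.cast_ne_zero.mpr (by omega)
          push_cast at hne
          exact hne (by linear_combination h)
        · exact h
    intro τ hτ
    rcases Nat.lt_or_ge (τ 0 + τ 1) (k+1) with hlt | hge
    · have hek : τ 0 + τ 1 = k := by omega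
      rw [eq_ee τ]
      exact lvl _ _ hek
    · exact hk τ hge
  have allP : P 0 := by
    have hdown : ∀ j, P (F.totalDegree + 1 - j) := by
      intro j
      induction j with
      | zero => simpa using base
      | succ j ih =>
        rcases Nat.lt_or_ge j (F.totalDegree + 1) with hj | hj
        · have : F.totalDegree + 1 - j = (F.totalDegree + 1 - (j+1)) + 1 := by omega
          rw [this] at ih
          exact step _ ih
        · have h0 : F.totalDegree + 1 - (j+1) = F.totalDegree + 1 - j := by omega
          rw [h0]; exact ih
    have := hdown (F.totalDegree + 1)
    simpa using this
  ext τ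
  rw [coeff_zero]
  exact allP τ (Nat.zero_le _)


lemma bin_coeff (n r u : ℕ) :
    coeff (ee r u) ((X 0 + X 1 : B2)^n) = if r + u = n then (n.choose r : ℂ) else 0 := by
  rw [add_pow, coeff_sum]
  have hterm : ∀ k, coeff (ee r u) ((X 0:B2)^k * X 1^(n-k) * ((n.choose k : ℕ) : B2))
      = if k = r ∧ n - k = u then (n.choose k : ℂ) else 0 := by
    intro k
    rw [X_pow_eq_monomial, X_pow_eq_monomial, monomial_mul, one_mul,
      ← map_natCast (C : ℂ →+* B2) (n.choose k), mul_comm, C_mul_monomial, mul_one]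
    have hee : Finsupp.single (0:Fin 2) k + Finsupp.single (1:Fin 2) (n-k) = ee k (n-k) := rfl
    rw [hee, coeff_monomial]
    by_cases hc : k = r ∧ n - k = u
    · rw [if_pos (ee_eq_iff.mpr hc), if_pos hc]
    · rw [if_neg (fun h => hc (ee_eq_iff.mp h)), if_neg hc]
  rw [Finset.sum_congr rfl (fun k _ => hterm k)]
  by_cases hru : r + u = n
  · rw [if_pos hru, Finset.sum_eq_single r]
    · rw [if_pos ⟨rfl, by omega⟩]
    · intro b _ hb
      rw [if_neg (fun h => hb h.1)]
    · intro hnot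
      exfalso
      exact hnot (Finset.mem_range.mpr (by omega))
  · rw [if_neg hru]
    apply Finset.sum_eq_zero
    intro k hk
    rw [if_neg]
    rintro ⟨rfl, hku⟩
    have := Finset.mem_range.mp hk
    omega

lemma L3 (F : B2) (hF : pderiv 0 F = pderiv 1 F) :
    ∃ p : Polynomial ℂ, F = Polynomial.aeval (X 0 + X 1 : B2) p := by
  classical
  have rel : ∀ r u : ℕ, ((r:ℂ)+1) * coeff (ee (r+1) u) F = ((u:ℂ)+1) * coeff (ee r (u+1)) F := by
    intro r u
    have h := congrArg (coeff (ee r u)) hF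
    rw [cd0, cd1] at h
    exact h
  have claim : ∀ r u : ℕ, coeff (ee r u) F = (((r+u).choose r : ℕ) : ℂ) * coeff (ee 0 (r+u)) F := by
    intro r
    induction r with
    | zero => intro u; simp
    | succ r ih =>
      intro u
      have h := rel r u
      rw [ih (u+1)] at h
      have hn1 : r + (u+1) = r+1+u := by omega
      rw [hn1] at h
      have hid : ((r:ℂ)+1) * (((r+1+u).choose (r+1) : ℕ) : ℂ)
          = ((u:ℂ)+1) * (((r+1+u).choose r : ℕ) : ℂ) := by
        have h2 := Nat.choose_succ_right_eq (r+u+1) r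
        have h3 : (r+u+1) - r = u + 1 := by omega
        rw [h3] at h2
        have h4 := congrArg (Nat.cast : ℕ → ℂ) h2
        push_cast at h4 ⊢
        rw [show r+1+u = r+u+1 from by omega]
        linear_combination h4
      have hr1 : ((r:ℂ)+1) ≠ 0 := by
        have : ((r:ℂ)+1) = ((r+1 : ℕ) : ℂ) := by push_cast; ring
        rw [this]
        exact_mod_cast Nat.succ_ne_zero r
      apply mul_left_cancel₀ hr1
      rw [h]
      linear_combination - coeff (ee 0 (r+1+u)) F * hid
  set N := F.totalDegree with hN
  refine ⟨∑ n ∈ Finset.range (N+1), Polynomial.C (coeff (ee 0 n) F) * Polynomial.X ^ n, ?_⟩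
  ext τ
  rw [eq_ee τ]
  rw [map_sum, coeff_sum]
  have hterm : ∀ n, coeff (ee (τ 0) (τ 1)) (Polynomial.aeval (X 0 + X 1 : B2)
        (Polynomial.C (coeff (ee 0 n) F) * Polynomial.X ^ n))
      = coeff (ee 0 n) F * (if τ 0 + τ 1 = n then ((n.choose (τ 0) : ℕ) : ℂ) else 0) := by
    intro n
    rw [map_mul, Polynomial.aeval_C, map_pow, Polynomial.aeval_X]
    have halg : (algebraMap ℂ B2) (coeff (ee 0 n) F) = C (coeff (ee 0 n) F) := rfl
    rw [halg, coeff_C_mul, bin_coeff]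
  rw [Finset.sum_congr rfl (fun n _ => hterm n)]
  by_cases hru : τ 0 + τ 1 ≤ N
  · rw [Finset.sum_eq_single (τ 0 + τ 1)]
    · rw [if_pos rfl, claim (τ 0) (τ 1)]
      ring
    · intro b _ hb
      rw [if_neg (fun h => hb h.symm), mul_zero]
    · intro hnot
      exact absurd (Finset.mem_range.mpr (by omega)) hnot
  · have hz : coeff (ee 0 (τ 0 + τ 1)) F = 0 := by
      apply coeff_eq_zero_of_totalDegree_lt
      rw [deg_sum, ee_0, ee_1]
      omega
    rw [claim (τ 0) (τ 1), hz, mul_zero]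
    symm
    apply Finset.sum_eq_zero
    intro n hn
    rw [if_neg (by have := Finset.mem_range.mp hn; omega), mul_zero]


-- ============ chunk 7: bracket operator facts ============

lemma pb2_t (g : A2) : pb2 t g = Dop g := by
  simp [pb2, t, Dop, P2, Fin.sum_univ_four, pderiv_X]
  ring

lemma Dop_mul (f g : A2) : Dop (f * g) = Dop f * g + f * Dop g := by
  simp [Dop, pderiv_mul]; ring

lemma Dop_C (r : ℂ) : Dop (C r) = 0 := by simp [Dop]

lemma Dop_t : Dop t = 0 := by
  simp [Dop, t, pderiv_X]

lemma Dop_q : Dop q = 0 := by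
  simp [Dop, q, pderiv_X]; ring

lemma Dop_t_pow (n : ℕ) : Dop (t ^ n) = 0 := by
  induction n with
  | zero => simpa using Dop_C 1
  | succ n ih => rw [pow_succ, Dop_mul, ih, Dop_t]; ring

lemma Dop_aeval_t (p : Polynomial ℂ) : Dop (Polynomial.aeval t p) = 0 := by
  induction p using Polynomial.induction_on' with
  | monomial n a =>
    rw [Polynomial.aeval_monomial]
    have halg : (algebraMap ℂ A2) a = C a := rfl
    rw [halg, Dop_mul, Dop_C, Dop_t_pow]
    ring
  | add p p' hp hp' => rw [map_add, Dop_add, hp, hp', add_zero]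

-- ============ chunk 8: wh facts for aeval t, powers, Psi ============

lemma wh_t_pow (n : ℕ) : wh (t ^ n) 0 := by
  induction n with
  | zero => simpa using isWeightedHomogeneous_one (R := ℂ) wv
  | succ n ih => have := ih.mul wh_t; simpa [pow_succ] using this

lemma wh_aeval_t (p : Polynomial ℂ) : wh (Polynomial.aeval t p) 0 := by
  induction p using Polynomial.induction_on' with
  | monomial n a =>
    rw [Polynomial.aeval_monomial]
    have halg : (algebraMap ℂ A2) a = C a := rfl
    rw [halg]
    exact wh_C_mul a (wh_t_pow n)
  | add p p' hp hp' => rw [map_add]; exact hp.add hp'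

lemma wh_X1_pow (k : ℕ) : wh ((X 1 : A2) ^ k) (k : ℤ) := by
  induction k with
  | zero => simpa using isWeightedHomogeneous_one (R := ℂ) wv
  | succ k ih =>
    have h1 : wh (X 1 : A2) 1 := by simpa [wv] using whX 1
    have h2 := ih.mul h1
    rw [← pow_succ] at h2
    have hc : ((k:ℤ) + 1) = ((k+1:ℕ):ℤ) := by push_cast; ring
    rwa [hc] at h2

lemma wh_X2_pow (k : ℕ) : wh ((X 2 : A2) ^ k) (-(k : ℤ)) := by
  induction k with
  | zero => simpa using isWeightedHomogeneous_one (R := ℂ) wv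
  | succ k ih =>
    have h1 : wh (X 2 : A2) (-1) := by simpa [wv] using whX 2
    have h2 := ih.mul h1
    rw [← pow_succ] at h2
    have hc : (-(k:ℤ)) + (-1) = -((k+1:ℕ):ℤ) := by push_cast; ring
    rwa [hc] at h2

lemma Psi_wh (K : B3) : wh (Psi K) 0 := by
  induction K using MvPolynomial.induction_on with
  | C r =>
    have : Psi (C r) = C r := by simp [Psi, algebraMap_eq]
    rw [this]
    exact isWeightedHomogeneous_C wv r
  | add p p' hp hp' => rw [map_add]; exact hp.add hp'
  | mul_X p i hp =>
    rw [map_mul]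
    have hXi : wh (Psi (X i)) 0 := by
      rcases fin3_cases i with rfl | rfl | rfl
      · have : Psi (X (0:Fin 3)) = X 0 := by simp [Psi]
        rw [this]; simpa [wv] using whX 0
      · have : Psi (X (1:Fin 3)) = X 1 * X 2 := by simp [Psi]
        rw [this]
        have := (whX 1).mul (whX 2); simpa [wv, wh] using this
      · have : Psi (X (2:Fin 3)) = X 3 := by simp [Psi]
        rw [this]; simpa [wv] using whX 3
    have := hp.mul hXi
    simpa using this

-- ============ chunk 9: star and starstar ============

lemma chi_C (r : ℂ) : chi (C r) = C r := by simp [chi, algebraMap_eq]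
lemma pii_C (r : ℂ) : pii (C r) = C r := by simp [pii, algebraMap_eq]

lemma chi_Dop {m : ℤ} {g : A2} (hg : wh g m) :
    chi (Dop g) = -(2:B3) * X 1 * (pderiv 0 (chi g) - pderiv 2 (chi g))
      + (X 0 - X 2) * (C (m:ℂ) * chi g + 2 * X 1 * pderiv 1 (chi g)) := by
  obtain ⟨h1, h2, h3⟩ := chi_pd g
  have he := euler hg
  have hD : Dop g = (-(2:A2) * (X 1 * X 2)) * (pderiv 0 g - pderiv 3 g)
      + (X 0 - X 3) * (C ((m:ℤ):ℂ) * g + 2 * (X 2 * pderiv 2 g)) := by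
    rw [Dop]
    linear_combination (X 0 - X 3 : A2) * he
  rw [hD]
  have h2B : chi (2 : A2) = (2 : B3) := by
    rw [show (2:A2) = C 2 from (map_ofNat C 2).symm, chi_C, map_ofNat]
  simp only [map_add, map_mul, map_sub, map_neg, chi_X0, chi_X1, chi_X2, chi_X3, chi_C, h2B,
    h1, h2, h3]
  ring

lemma starstar {m : ℤ} {g h : A2} (hg : wh g m) (heq : Dop g = q * h) :
    2 * (X 0 * X 1 - 1 : B2) * (pderiv 0 (pii (chi g)) - pderiv 1 (pii (chi g)))
      = C (m:ℂ) * (X 0 - X 1) * pii (chi g) := by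
  have hs : -(2:B3) * X 1 * (pderiv 0 (chi g) - pderiv 2 (chi g))
      + (X 0 - X 2) * (C (m:ℂ) * chi g + 2 * X 1 * pderiv 1 (chi g)) = u3 * chi h := by
    rw [← chi_Dop hg, heq, map_mul, chi_q]
  have h0 := (pi_pd (chi g)).1
  have h1 := (pi_pd (chi g)).2
  have happ := congrArg pii hs
  have h2B : pii (2 : B3) = (2 : B2) := by
    rw [show (2:B3) = C 2 from (map_ofNat C 2).symm, pii_C, map_ofNat]
  rw [map_mul, pii_u3, zero_mul] at happ
  simp only [map_add, map_mul, map_sub, map_neg, pii_X0, pii_X1, pii_X2, pii_C, h2B] at happ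
  linear_combination (2 * (X 0 * X 1 - 1 : B2)) * h0 - (2 * (X 0 * X 1 - 1 : B2)) * h1 - happ

-- ============ chunk 10: key lemma ============

lemma w_ne : (X 0 * X 1 - 1 : B2) ≠ 0 := by
  intro hcon
  have := congrArg (constantCoeff) hcon
  simp at this

lemma key (m : ℤ) (g h : A2) (hg : wh g m) (heq : Dop g = q * h) :
    ∃ p : Polynomial ℂ, q ∣ (g - Polynomial.aeval t p) := by
  have hss := starstar hg heq
  rcases lt_trichotomy m 0 with hm | hm | hm
  · -- m < 0
    refine ⟨0, ?_⟩
    rw [map_zero, sub_zero]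
    obtain ⟨k', hk'⟩ : ∃ k', (-m).toNat = k' + 1 := ⟨(-m).toNat - 1, by omega⟩
    set k : ℕ := k' + 1 with hkdef
    have hk1 : (k:ℤ) = -m := by
      rw [← hk']
      exact Int.toNat_of_nonneg (by omega)
    obtain ⟨G1, hG1⟩ := z_pow_dvd_chi hg k (by omega)
    have hpg : pii (chi g) = (X 0 * X 1 - 1)^k * pii G1 := by
      rw [hG1, map_mul, map_pow, pii_X1]
    set w : B2 := (X 0 * X 1 - 1 : B2) with hw
    set V : B2 := pii G1 with hV
    have hd0 : pderiv 0 (w^k * V) = (k:B2) * w^k' * X 1 * V + w^k * pderiv 0 V := by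
      rw [pderiv_mul, pderiv_pow]
      have : pderiv 0 w = X 1 := by rw [hw]; simp [pderiv_X]
      rw [this, hkdef]
      simp only [Nat.add_sub_cancel]
      try ring
    have hd1 : pderiv 1 (w^k * V) = (k:B2) * w^k' * X 0 * V + w^k * pderiv 1 V := by
      rw [pderiv_mul, pderiv_pow]
      have : pderiv 1 w = X 0 := by rw [hw]; simp [pderiv_X]
      rw [this, hkdef]
      simp only [Nat.add_sub_cancel]
      try ring
    have hcast : ((k:ℕ) : B2) = C ((k:ℕ) : ℂ) := by rw [← map_natCast (C : ℂ →+* B2) k]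
    have hmk : (C ((-m : ℤ):ℂ) : B2) = C ((m:ℤ):ℂ) + 2 * C ((k:ℕ):ℂ) := by
      rw [← map_ofNat (C : ℂ →+* B2) 2, ← map_mul, ← map_add]
      congr 1
      have : ((k:ℕ):ℂ) = ((-m : ℤ) : ℂ) := by
        rw [← hk1]; push_cast; ring
      rw [this]
      push_cast
      ring
    have hE : w^k * (2 * w * (pderiv 0 V - pderiv 1 V) - C ((-m : ℤ):ℂ) * (X 0 - X 1) * V)
        = 0 := by
      rw [hmk]
      rw [hpg] at hss
      rw [hd0, hd1] at hss
      rw [hcast] at hss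
      have hwk : w^k = w^k' * w := by rw [hkdef, pow_succ]
      rw [hwk] at hss ⊢
      linear_combination hss
    have hA : 2 * w * (pderiv 0 V - pderiv 1 V) = C ((-m : ℤ):ℂ) * (X 0 - X 1) * V := by
      have hwk : w^k ≠ 0 := pow_ne_zero _ w_ne
      have := (mul_eq_zero.mp hE).resolve_left hwk
      linear_combination this
    have hV0 : V = 0 := L1 (by omega : 0 < -m) V hA
    have hpiiG1 : pii G1 = 0 := hV0
    obtain ⟨K, hK⟩ := pii_zero_dvd hpiiG1
    -- candidate
    set cand : A2 := q * ((X 2)^k * Psi K) with hcand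
    have hchicand : chi cand = chi g := by
      rw [hcand, map_mul, map_mul, map_pow, chi_q, chi_X2, chi_Psi, hG1, hK]
      ring
    have hwhcand : wh cand m := by
      have h1 := wh_q.mul ((wh_X2_pow k).mul (Psi_wh K))
      have : (0 : ℤ) + (-(k:ℤ) + 0) = m := by omega
      rwa [this] at h1
    have : g - cand = 0 := by
      apply chi_inj (wh_sub hg hwhcand)
      rw [map_sub, hchicand, sub_self]
    have hgc : g = cand := by rwa [sub_eq_zero] at this
    rw [hgc, hcand]
    exact dvd_mul_right q _
  · -- m = 0
    subst hm
    rw [Int.cast_zero, map_zero, zero_mul, zero_mul] at hss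
    have hker : pderiv 0 (pii (chi g)) = pderiv 1 (pii (chi g)) := by
      rcases mul_eq_zero.mp hss with h2 | h2
      · exfalso
        have h3 := congrArg constantCoeff h2
        simp [map_ofNat] at h3
      · rwa [sub_eq_zero] at h2
    obtain ⟨p, hp⟩ := L3 _ hker
    refine ⟨p, ?_⟩
    set g' : A2 := g - Polynomial.aeval t p with hg'
    have hwh' : wh g' 0 := wh_sub hg (wh_aeval_t p)
    have hchit : chi t = (X 0 + X 2 : B3) := by rw [t, map_add, chi_X0, chi_X3]
    have hchig' : chi g' = chi g - Polynomial.aeval (X 0 + X 2 : B3) p := by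
      rw [hg', map_sub]
      congr 1
      rw [← hchit]
      exact (Polynomial.aeval_algHom_apply chi t p).symm
    have hpiixx : pii (X 0 + X 2 : B3) = (X 0 + X 1 : B2) := by
      rw [map_add, pii_X0, pii_X2]
    have hpii' : pii (chi g') = 0 := by
      rw [hchig', map_sub, hp, ← hpiixx,
        ← Polynomial.aeval_algHom_apply pii (X 0 + X 2 : B3) p, sub_self]
    obtain ⟨K, hK⟩ := pii_zero_dvd hpii'
    set cand : A2 := q * Psi K with hcand
    have hchicand : chi cand = chi g' := by
      rw [hcand, map_mul, chi_q, chi_Psi, hK]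
    have hwhcand : wh cand 0 := by
      have h1 := wh_q.mul (Psi_wh K)
      simpa using h1
    have hzero : g' - cand = 0 := by
      apply chi_inj (wh_sub hwh' hwhcand)
      rw [map_sub, hchicand, sub_self]
    have hgc : g' = cand := by rwa [sub_eq_zero] at hzero
    show q ∣ g'
    rw [hgc, hcand]
    exact dvd_mul_right q _
  · -- m > 0
    refine ⟨0, ?_⟩
    rw [map_zero, sub_zero]
    have hG0 : pii (chi g) = 0 := L1 hm _ hss
    obtain ⟨K, hK⟩ := pii_zero_dvd hG0
    set n : ℕ := m.toNat with hndef
    have hn : (n:ℤ) = m := Int.toNat_of_nonneg (by omega)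
    set cand : A2 := q * ((X 1)^n * Psi K) with hcand
    have hchicand : chi cand = chi g := by
      rw [hcand, map_mul, map_mul, map_pow, chi_q, chi_X1, chi_Psi, one_pow, hK]
      ring
    have hwhcand : wh cand m := by
      have h1 := wh_q.mul ((wh_X1_pow n).mul (Psi_wh K))
      have h2 : (0 : ℤ) + ((n:ℤ) + 0) = m := by omega
      rwa [h2] at h1
    have hzero : g - cand = 0 := by
      apply chi_inj (wh_sub hg hwhcand)
      rw [map_sub, hchicand, sub_self]
    have hgc : g = cand := by rwa [sub_eq_zero] at hzero
    rw [hgc, hcand]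
    exact dvd_mul_right q _

-- main theorem

theorem main (g : A2) :
    pb2 t g ∈ Ideal.span ({q} : Set A2) ↔
      ∃ p : Polynomial ℂ, g - Polynomial.aeval t p ∈ Ideal.span ({q} : Set A2) := by
  rw [pb2_t, Ideal.mem_span_singleton]
  constructor
  · intro hdvd
    obtain ⟨h, hh⟩ := hdvd
    have hcomp : ∀ m : ℤ, Dop (wc m g) = q * wc m h := by
      intro m
      rw [← wc_Dop, hh]
      exact wc_q_mul m h
    have hkey : ∀ m : ℤ, ∃ p : Polynomial ℂ, q ∣ (wc m g - Polynomial.aeval t p) := by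
      intro m
      exact key m (wc m g) (wc m h) (weightedHomogeneousComponent_isWeightedHomogeneous m g)
        (hcomp m)
    choose P hP using hkey
    have hfin := weightedHomogeneousComponent_finsupp (w := wv) g
    set s : Finset ℤ := hfin.toFinset with hs
    have hsum : ∑ m ∈ s, wc m g = g := by
      rw [← finsum_eq_sum _ hfin]
      exact sum_weightedHomogeneousComponent wv g
    refine ⟨∑ m ∈ s, P m, Ideal.mem_span_singleton.mpr ?_⟩
    have hexp : g - Polynomial.aeval t (∑ m ∈ s, P m)
        = ∑ m ∈ s, (wc m g - Polynomial.aeval t (P m)) := by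
      rw [Finset.sum_sub_distrib, hsum, map_sum]
    rw [hexp]
    exact Finset.dvd_sum (fun m _ => hP m)
  · rintro ⟨p, hp⟩
    obtain ⟨k, hk⟩ := Ideal.mem_span_singleton.mp hp
    have hg : g = Polynomial.aeval t p + q * k := by
      rw [← hk]; ring
    rw [hg, Dop_add, Dop_aeval_t, Dop_mul, Dop_q, zero_add, zero_mul, zero_add]
    exact Dvd.intro _ rfl

end S7

/-- in `O(SL_2) = ℂ[a,b,c,d]/(ad − bc − 1)` with the induced
Poisson bracket, the Poisson centralizer of the trace `a + d` is `ℂ[a+d]`: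
stated at the level of representatives, `{a+d, g}` lies in the ideal
`(ad − bc − 1)` if and only if `g` agrees modulo that ideal with a polynomial
in `a + d`. -/
theorem stmt7 :
    ∀ g : A2,
      pb2 (X 0 + X 3) g ∈ Ideal.span ({X 0 * X 3 - X 1 * X 2 - 1} : Set A2) ↔
      ∃ p : Polynomial ℂ,
        g - Polynomial.aeval (X 0 + X 3) p ∈
          Ideal.span ({X 0 * X 3 - X 1 * X 2 - 1} : Set A2) := by
  intro g
  exact S7.main g
end
end
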